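/- The positivity-preserving limiter yields a nonnegative function: if the cell average f̄ > 0 and m' = min_A f, then f̃(x) = θ(f(x) - f̄) + f̄ with θ = min{|f̄/(m' - f̄)|, 1} satisfies f̃(x) ≥ 0 for all x in the cell. -/
import Mathlib

open MeasureTheory

/-- The positivity-preserving limiter yields a nonnegative function: if the cell average
`f̄ > 0` and `m' = min_A f < f̄`, then `f̃(x) = θ (f(x) - f̄) + f̄` with
`θ = min (f̄/(f̄ - m')) 1` satisfies `f̃ ≥ 0` on the cell. -/
theorem stmt_7 (A : Set ℝ) (hA : MeasurableSet A) (hAc : IsCompact A) (hAne : A.Nonempty)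
    (f : ℝ → ℝ) (hf : ContinuousOn f A)
    (fbar m' θ : ℝ)
    (hfbar : fbar = (volume A).toReal⁻¹ * ∫ x in A, f x)
    (hfbarpos : 0 < fbar)
    (hm : IsLeast (f '' A) m') (hmlt : m' < fbar)
    (hθ : θ = min (fbar / (fbar - m')) 1) :
    ∀ x ∈ A, 0 ≤ θ * (f x - fbar) + fbar := by
  intro x hx
  have hsub : (0:ℝ) < fbar - m' := by linarith
  have hθ0 : 0 ≤ θ := by
    rw [hθ]
    exact le_min (le_of_lt (div_pos hfbarpos hsub)) zero_le_one
  have hθle : θ * (fbar - m') ≤ fbar := by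
    have : θ ≤ fbar / (fbar - m') := hθ ▸ min_le_left _ _
    calc θ * (fbar - m') ≤ fbar / (fbar - m') * (fbar - m') := by
          exact mul_le_mul_of_nonneg_right this (le_of_lt hsub)
      _ = fbar := div_mul_cancel₀ _ (ne_of_gt hsub)
  have hfx : m' ≤ f x := hm.2 ⟨x, hx, rfl⟩
  nlinarith [mul_le_mul_of_nonneg_left hfx hθ0]
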